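/- Fix an integer n ≥ 1 and real numbers p > 1, q > 1, r ≥ 2 with r > max{2, n}(p-1), and additionally r < 2n/(n-2) if n ≥ 3. Define a* := r(nq+2-n)/(2(r - n(p-1))) and b* := (1/2 + 1/n - 1/r)/(2/n). Suppose q < ((n²p - n² - 4p + 12)r - 2n²p + 2n² - 4np + 4n)/((n²p - n² + 2np - 2n)r - 2n²p + 2n²) and the denominator (n²p - n² + 2np - 2n)r - 2n²p + 2n² is positive. Then nq + 2 - n < 8(r - n(p-1))/((p-1)(nr + 2r - 2n)), and consequently 2a*·b*·(p-1) < 2. -/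

import Mathlib

theorem stmt_10 (n : ℕ) (hn : 1 ≤ n) (p q r aStar bStar : ℝ)
    (hp : 1 < p) (hq : 1 < q) (hr2 : 2 ≤ r) (hr : max 2 (n : ℝ) * (p - 1) < r)
    (hrn : 3 ≤ n → r < 2 * (n : ℝ) / ((n : ℝ) - 2))
    (haStar : aStar = r * ((n : ℝ) * q + 2 - (n : ℝ)) / (2 * (r - (n : ℝ) * (p - 1))))
    (hbStar : bStar = (1 / 2 + 1 / (n : ℝ) - 1 / r) / (2 / (n : ℝ)))
    (hden : 0 < ((n : ℝ)^2 * p - (n : ℝ)^2 + 2 * (n : ℝ) * p - 2 * (n : ℝ)) * r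
              - 2 * (n : ℝ)^2 * p + 2 * (n : ℝ)^2)
    (hqlt : q < (((n : ℝ)^2 * p - (n : ℝ)^2 - 4 * p + 12) * r
              - 2 * (n : ℝ)^2 * p + 2 * (n : ℝ)^2 - 4 * (n : ℝ) * p + 4 * (n : ℝ)) /
            (((n : ℝ)^2 * p - (n : ℝ)^2 + 2 * (n : ℝ) * p - 2 * (n : ℝ)) * r
              - 2 * (n : ℝ)^2 * p + 2 * (n : ℝ)^2)) :
    (n : ℝ) * q + 2 - (n : ℝ)
      < 8 * (r - (n : ℝ) * (p - 1)) / ((p - 1) * ((n : ℝ) * r + 2 * r - 2 * (n : ℝ))) ∧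
    2 * aStar * bStar * (p - 1) < 2 := by
  have hn1 : (1 : ℝ) ≤ (n : ℝ) := by exact_mod_cast hn
  have hn0 : (0 : ℝ) < (n : ℝ) := by linarith
  have hp1 : (0 : ℝ) < p - 1 := by linarith
  have hnr : (n : ℝ) * (p - 1) < r := by
    have : (n : ℝ) ≤ max 2 (n : ℝ) := le_max_right _ _
    nlinarith [le_max_right (2 : ℝ) (n : ℝ)]
  have hpos : (0 : ℝ) < r - (n : ℝ) * (p - 1) := by linarith
  have hA : (0 : ℝ) < (n : ℝ) * r + 2 * r - 2 * (n : ℝ) := by nlinarith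
  have hr0 : (0 : ℝ) < r := by linarith
  have hqD : q * (((n : ℝ)^2 * p - (n : ℝ)^2 + 2 * (n : ℝ) * p - 2 * (n : ℝ)) * r
              - 2 * (n : ℝ)^2 * p + 2 * (n : ℝ)^2)
      < (((n : ℝ)^2 * p - (n : ℝ)^2 - 4 * p + 12) * r
              - 2 * (n : ℝ)^2 * p + 2 * (n : ℝ)^2 - 4 * (n : ℝ) * p + 4 * (n : ℝ)) :=
    (lt_div_iff₀ hden).mp hqlt
  have key : ((n : ℝ) * q + 2 - (n : ℝ)) * ((p - 1) * ((n : ℝ) * r + 2 * r - 2 * (n : ℝ)))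
      < 8 * (r - (n : ℝ) * (p - 1)) := by
    have hmul : (0 : ℝ) < (n : ℝ) := hn0
    nlinarith [mul_lt_mul_of_pos_left hqD hn0, hqD, sq_nonneg ((n:ℝ) - 1)]
  constructor
  · rw [lt_div_iff₀ (by positivity)]
    exact key
  · have hb : bStar = ((n : ℝ) * r + 2 * r - 2 * (n : ℝ)) / (4 * r) := by
      rw [hbStar]; field_simp; ring
    have heq : 2 * aStar * bStar * (p - 1)
        = ((n : ℝ) * q + 2 - (n : ℝ)) * ((p - 1) * ((n : ℝ) * r + 2 * r - 2 * (n : ℝ)))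
          / (4 * (r - (n : ℝ) * (p - 1))) := by
      rw [haStar, hb]; field_simp
    rw [heq, div_lt_iff₀ (by positivity)]
    linarith [key]
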